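/- Let c_1, …, c_n be chords of the unit circle in ℝ² whose 2n endpoints are pairwise distinct, and suppose the chords pairwise intersect (every two of the closed segments have a common point). Let f : ℝ² → ℝ be a nonzero linear functional and t a real number such that exactly n of the 2n endpoints satisfy f(x) < t and exactly n of them satisfy f(x) > t. Then every chord c_i has exactly one endpoint in each open half-plane: if a_i and b_i are the two endpoints of c_i, then f(a_i) < t if and only if f(b_i) > t. -/

import Mathlib

open Finset

/-- **Every chord of a pairwise intersecting family has one endpoint on each side of a
bisecting line.** Let `c i = [a i, b i]` (`i = 1, …, n`) be chords of the unit circle in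
`ℝ²` with pairwise distinct endpoints, pairwise intersecting. If a line `{x : f x = t}`
(with `f` a nonzero linear functional) is such that exactly `n` of the `2n` endpoints lie
in each open half-plane, then each chord has exactly one endpoint in each open half-plane:
`f (a i) < t ↔ t < f (b i)`. -/
theorem bisecting_line_separates_endpoints_of_each_chord {n : ℕ}
    (a b : Fin n → EuclideanSpace ℝ (Fin 2))
    (ha : ∀ i, ‖a i‖ = 1) (hb : ∀ i, ‖b i‖ = 1)
    (hdist : Function.Injective (Sum.elim a b))
    (hint : ∀ i j, i ≠ j →
      (segment ℝ (a i) (b i) ∩ segment ℝ (a j) (b j)).Nonempty)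
    (f : EuclideanSpace ℝ (Fin 2) →ₗ[ℝ] ℝ) (t : ℝ) (hf : f ≠ 0)
    (hlt : (univ.filter fun p : Fin n ⊕ Fin n => f (Sum.elim a b p) < t).card = n)
    (hgt : (univ.filter fun p : Fin n ⊕ Fin n => t < f (Sum.elim a b p)).card = n) :
    ∀ i, (f (a i) < t ↔ t < f (b i)) := by
  -- Step 1: no endpoint lies on the line
  have hcard : Fintype.card (Fin n ⊕ Fin n) = 2 * n := by
    simp [Fintype.card_sum]; ring
  have hdisj : Disjoint (univ.filter fun p : Fin n ⊕ Fin n => f (Sum.elim a b p) < t)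
      (univ.filter fun p : Fin n ⊕ Fin n => t < f (Sum.elim a b p)) := by
    rw [Finset.disjoint_left]
    intro p h1 h2
    rw [Finset.mem_filter] at h1 h2
    exact absurd h2.2 (not_lt.2 h1.2.le)
  have huniv : (univ.filter fun p : Fin n ⊕ Fin n => f (Sum.elim a b p) < t) ∪
      (univ.filter fun p : Fin n ⊕ Fin n => t < f (Sum.elim a b p)) = univ := by
    apply Finset.eq_univ_of_card
    rw [Finset.card_union_of_disjoint hdisj, hlt, hgt, hcard]
    ring
  have hne : ∀ p : Fin n ⊕ Fin n, f (Sum.elim a b p) < t ∨ t < f (Sum.elim a b p) := by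
    intro p
    have hp := Finset.mem_univ p
    rw [← huniv, Finset.mem_union, Finset.mem_filter, Finset.mem_filter] at hp
    tauto
  -- Step 2: count endpoints below per chord
  set g : Fin n → ℕ := fun i =>
    (if f (a i) < t then 1 else 0) + (if f (b i) < t then 1 else 0) with hg
  have hsum : ∑ i, g i = n := by
    have h := hlt
    rw [Finset.card_filter, Fintype.sum_sum_type] at h
    simp only [Sum.elim_inl, Sum.elim_inr] at h
    rw [hg, Finset.sum_add_distrib]
    exact h
  -- Step 3: two chords strictly on opposite sides cannot intersect
  have hsep : ∀ i j, i ≠ j → f (a i) < t → f (b i) < t →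
      t < f (a j) → t < f (b j) → False := by
    intro i j hij h1 h2 h3 h4
    obtain ⟨x, hxi, hxj⟩ := hint i j hij
    have hx1 : f x < t :=
      (convex_halfSpace_lt (LinearMap.isLinear f) t).segment_subset h1 h2 hxi
    have hx2 : t < f x :=
      (convex_halfSpace_gt (LinearMap.isLinear f) t).segment_subset h3 h4 hxj
    exact absurd hx2 (not_lt.2 hx1.le)
  -- Claim A: no chord has both endpoints below
  have clA : ∀ i, f (a i) < t → f (b i) < t → False := by
    intro i h1 h2
    have hgi : g i = 2 := by simp [hg, h1, h2]
    have hn1 : 1 ≤ n := Nat.one_le_iff_ne_zero.2 (by rintro rfl; exact i.elim0)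
    have hsplit : ∑ j, g j = g i + ∑ j ∈ univ.erase i, g j :=
      (Finset.add_sum_erase _ _ (Finset.mem_univ i)).symm
    have hex : ∃ j, j ≠ i ∧ g j = 0 := by
      by_contra h
      push_neg at h
      have hle : (univ.erase i).card ≤ ∑ j ∈ univ.erase i, g j := by
        calc (univ.erase i).card = ∑ _j ∈ univ.erase i, 1 := by simp
          _ ≤ ∑ j ∈ univ.erase i, g j := by
              apply Finset.sum_le_sum
              intro j hj
              have hji : j ≠ i := Finset.ne_of_mem_erase hj
              exact Nat.one_le_iff_ne_zero.2 (h j hji)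
      have hce : (univ.erase i).card = n - 1 := by
        rw [Finset.card_erase_of_mem (Finset.mem_univ i), Finset.card_univ, Fintype.card_fin]
      rw [hce] at hle
      rw [hsplit, hgi] at hsum
      omega
    obtain ⟨j, hji, hgj⟩ := hex
    have haj : t < f (a j) := by
      refine (hne (Sum.inl j)).resolve_left ?_
      intro h
      simp only [Sum.elim_inl] at h
      simp [hg, if_pos h] at hgj
    have hbj : t < f (b j) := by
      refine (hne (Sum.inr j)).resolve_left ?_
      intro h
      simp only [Sum.elim_inr] at h
      simp only [hg, if_pos h] at hgj
      omega
    exact hsep i j (Ne.symm hji) h1 h2 haj hbj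
  -- Claim B: no chord has both endpoints above
  have clB : ∀ i, t < f (a i) → t < f (b i) → False := by
    intro i h1 h2
    have hgi : g i = 0 := by
      simp [hg, if_neg (not_lt.2 h1.le), if_neg (not_lt.2 h2.le)]
    have hsplit : ∑ j, g j = g i + ∑ j ∈ univ.erase i, g j :=
      (Finset.add_sum_erase _ _ (Finset.mem_univ i)).symm
    have hex : ∃ j, j ≠ i ∧ g j = 2 := by
      by_contra h
      push_neg at h
      have hle : ∑ j ∈ univ.erase i, g j ≤ (univ.erase i).card := by
        calc ∑ j ∈ univ.erase i, g j ≤ ∑ _j ∈ univ.erase i, 1 := by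
              apply Finset.sum_le_sum
              intro j hj
              have hji : j ≠ i := Finset.ne_of_mem_erase hj
              have hgj2 : g j ≤ 2 := by
                simp only [hg]; split_ifs <;> omega
              have := h j hji
              omega
          _ = (univ.erase i).card := by simp
      have hce : (univ.erase i).card = n - 1 := by
        rw [Finset.card_erase_of_mem (Finset.mem_univ i), Finset.card_univ, Fintype.card_fin]
      have hn1 : 1 ≤ n := Nat.one_le_iff_ne_zero.2 (by rintro rfl; exact i.elim0)
      rw [hce] at hle
      rw [hsplit, hgi] at hsum
      omega
    obtain ⟨j, hji, hgj⟩ := hex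
    have haj : f (a j) < t := by
      by_contra h
      simp only [hg, if_neg h] at hgj
      split_ifs at hgj <;> omega
    have hbj : f (b j) < t := by
      by_contra h
      simp only [hg, if_neg h] at hgj
      split_ifs at hgj <;> omega
    exact hsep j i (Ne.symm hji).symm haj hbj h1 h2
  -- Conclusion
  intro i
  constructor
  · intro h1
    refine (hne (Sum.inr i)).resolve_left ?_
    intro h2
    exact clA i h1 h2
  · intro h2
    refine (hne (Sum.inl i)).resolve_right ?_
    intro h1
    exact clB i h1 h2
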